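/- Let ⟨C_{α,i} : α ∈ acc(μ), i(α) ≤ i < λ⟩ be a □^{ind}(μ,λ)-sequence with c(α,β) the least i such that i(β) ≤ i and α ∈ acc(C_{β,i}). Suppose i < λ, Λ ⊆ i, X ⊆ acc(μ) has size μ, X is well-connected in Λ, and α ∈ acc(C_{β,i}) for all α < β in X. Then D = ⋃_{α ∈ X} C_{α,i} is a club in μ satisfying D ∩ α = C_{α,i} for all α ∈ acc(D), contradicting clause (6) of the definition of □^{ind}(μ,λ). -/

import Mathlib

open Cardinal Set

noncomputable section

/-- The color of the unordered pair `{a,b}` under `c`. -/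
def pairColor (c : Ordinal → Ordinal → Ordinal) (a b : Ordinal) : Ordinal :=
  c (min a b) (max a b)

/-- `X` is well-connected in the set of colors `Λ` with respect to `c`, with the
connecting paths allowed to use any vertices from `Dom`. -/
def WellConnectedIn (Dom : Set Ordinal) (c : Ordinal → Ordinal → Ordinal)
    (Λ : Set Ordinal) (X : Set Ordinal) : Prop :=
  ∀ α ∈ X, ∀ β ∈ X, α < β →
    ∃ (n : ℕ) (f : ℕ → Ordinal), f 0 = α ∧ f n = β ∧
      (∀ k ≤ n, α ≤ f k ∧ f k ∈ Dom) ∧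
      (∀ k < n, f k ≠ f (k + 1) ∧ pairColor c (f k) (f (k + 1)) ∈ Λ)

/-- The set of accumulation points of a set of ordinals. -/
def accPts (C : Set Ordinal) : Set Ordinal :=
  {β | (C ∩ Set.Iio β).Nonempty ∧ sSup (C ∩ Set.Iio β) = β}

/-- `C` is club in `α`. -/
def IsClubIn (C : Set Ordinal) (α : Ordinal) : Prop :=
  C ⊆ Set.Iio α ∧ (∀ β < α, ∃ γ ∈ C, β ≤ γ) ∧ accPts C ∩ Set.Iio α ⊆ C

/-- A `□^{ind}(μ, λ)`-sequence `⟨C α i : α ∈ acc(μ), i(α) ≤ i < λ⟩`. -/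
def IsIndexedSquareSeq (μ lam : Cardinal.{0}) (iidx : Ordinal → Ordinal)
    (C : Ordinal → Ordinal → Set Ordinal) : Prop :=
  -- (1) indices below λ
  (∀ α, α < μ.ord → Order.IsSuccLimit α → iidx α < lam.ord) ∧
  -- (2) clubs
  (∀ α, α < μ.ord → Order.IsSuccLimit α → ∀ i, iidx α ≤ i → i < lam.ord → IsClubIn (C α i) α) ∧
  -- (3) monotonicity
  (∀ α, α < μ.ord → Order.IsSuccLimit α → ∀ i j, iidx α ≤ i → i ≤ j → j < lam.ord →
    C α i ⊆ C α j) ∧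
  -- (4) coherence
  (∀ α β, α < β → β < μ.ord → Order.IsSuccLimit α → Order.IsSuccLimit β →
    ∀ i, iidx β ≤ i → i < lam.ord → α ∈ accPts (C β i) →
      iidx α ≤ i ∧ C α i = C β i ∩ Set.Iio α) ∧
  -- (5) every pair is connected at some index
  (∀ α β, α < β → β < μ.ord → Order.IsSuccLimit α → Order.IsSuccLimit β →
    ∃ i, iidx β ≤ i ∧ i < lam.ord ∧ α ∈ accPts (C β i)) ∧
  -- (6) nontriviality: no club in μ coheres with the sequence at any fixed index
  (∀ D : Set Ordinal, IsClubIn D μ.ord → ∀ i, i < lam.ord →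
    ∃ α ∈ accPts D, α < μ.ord ∧ D ∩ Set.Iio α ≠ C α i)

/-- `c (α, β)` is the least `i` with `i(β) ≤ i` and `α ∈ acc(C β i)`. -/
def IsLeastIndexColoring (μ : Cardinal.{0}) (iidx : Ordinal → Ordinal)
    (C : Ordinal → Ordinal → Set Ordinal) (c : Ordinal → Ordinal → Ordinal) : Prop :=
  ∀ α β, α < β → β < μ.ord → Order.IsSuccLimit α → Order.IsSuccLimit β →
    (iidx β ≤ c α β ∧ α ∈ accPts (C β (c α β)) ∧
      ∀ j, iidx β ≤ j → α ∈ accPts (C β j) → c α β ≤ j)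

lemma accPts_isLimit {S : Set Ordinal} {β : Ordinal} (h : β ∈ accPts S) : Order.IsSuccLimit β := by
  obtain ⟨hne, hsup⟩ := h
  rcases Ordinal.zero_or_succ_or_isSuccLimit β with rfl | ⟨γ, rfl⟩ | hl
  · obtain ⟨x, _, hx⟩ := hne; exact absurd hx (not_lt_zero (a := x))
  · have : sSup (S ∩ Set.Iio (Order.succ γ)) ≤ γ :=
      csSup_le hne fun y hy => Order.lt_succ_iff.mp hy.2
    rw [hsup] at this; exact absurd this (not_le.mpr (Order.lt_succ γ))
  · exact hl

lemma accPts_mono {S T : Set Ordinal} (h : S ⊆ T) : accPts S ⊆ accPts T := by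
  rintro β ⟨hne, hsup⟩
  have hsub : S ∩ Set.Iio β ⊆ T ∩ Set.Iio β := inter_subset_inter_left _ h
  have hbdd : BddAbove (T ∩ Set.Iio β) := ⟨β, fun y hy => hy.2.le⟩
  refine ⟨hne.mono hsub, le_antisymm (csSup_le (hne.mono hsub) fun y hy => hy.2.le) ?_⟩
  calc β = sSup (S ∩ Set.Iio β) := hsup.symm
    _ ≤ sSup (T ∩ Set.Iio β) := csSup_le_csSup hbdd hne hsub

lemma accPts_congr {S T : Set Ordinal} {β : Ordinal}
    (h : S ∩ Set.Iio β = T ∩ Set.Iio β) (hβ : β ∈ accPts S) : β ∈ accPts T := by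
  obtain ⟨hne, hsup⟩ := hβ
  exact ⟨h ▸ hne, h ▸ hsup⟩

/-- Given a `□^{ind}(μ,λ)`-sequence, its derived coloring `c`, a color `i < λ`,
`Λ ⊆ i`, and `X ⊆ acc(μ)` of size `μ` that is well-connected in `Λ` and satisfies
`α ∈ acc(C β i)` for all `α < β` in `X`, the set `D = ⋃_{α ∈ X} C α i` is a club
in `μ` with `D ∩ α = C α i` for every `α ∈ acc(D)` (which contradicts clause (6)
of the definition of a `□^{ind}(μ,λ)`-sequence). -/
theorem stmt14 (μ lam : Cardinal.{0}) (hlam : lam.IsRegular) (hμ : μ.IsRegular)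
    (hlamμ : lam < μ)
    (iidx : Ordinal → Ordinal) (C : Ordinal → Ordinal → Set Ordinal)
    (hseq : IsIndexedSquareSeq μ lam iidx C)
    (c : Ordinal → Ordinal → Ordinal) (hc : IsLeastIndexColoring μ iidx C c)
    (i : Ordinal) (hi : i < lam.ord) (Λ : Set Ordinal) (hΛ : Λ ⊆ Set.Iio i)
    (X : Set Ordinal) (hX : X ⊆ {α | α < μ.ord ∧ Order.IsSuccLimit α})
    (hXsize : #X = Cardinal.lift.{1} μ)
    (hwc : WellConnectedIn {α | α < μ.ord ∧ Order.IsSuccLimit α} c Λ X)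
    (hacc : ∀ α ∈ X, ∀ β ∈ X, α < β → α ∈ accPts (C β i)) :
    IsClubIn (⋃ α ∈ X, C α i) μ.ord ∧
      ∀ α ∈ accPts (⋃ α ∈ X, C α i), α < μ.ord →
        (⋃ α ∈ X, C α i) ∩ Set.Iio α = C α i := by
  obtain ⟨h1, h2, h3, h4, h5, h6⟩ := hseq
  -- edge lemma
  have edge' : ∀ γ δ : Ordinal, γ < μ.ord → δ < μ.ord → Order.IsSuccLimit γ → Order.IsSuccLimit δ →
      γ < δ → c γ δ < i → iidx γ ≤ i ∧ iidx δ ≤ i := by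
    intro γ δ hγμ hδμ hγl hδl hlt hci
    obtain ⟨hidx, hmem, _⟩ := hc γ δ hlt hδμ hγl hδl
    have hidxδ : iidx δ ≤ i := hidx.trans hci.le
    have hsub : C δ (c γ δ) ⊆ C δ i := h3 δ hδμ hδl _ i hidx hci.le hi
    have hmem' : γ ∈ accPts (C δ i) := accPts_mono hsub hmem
    exact ⟨(h4 γ δ hlt hδμ hγl hδl i hidxδ hi hmem').1, hidxδ⟩
  have key : ∀ γ δ : Ordinal, γ < μ.ord ∧ Order.IsSuccLimit γ → δ < μ.ord ∧ Order.IsSuccLimit δ →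
      γ ≠ δ → pairColor c γ δ ∈ Λ → iidx γ ≤ i ∧ iidx δ ≤ i := by
    intro γ δ hγ hδ hne hcol
    rcases hne.lt_or_gt with h | h
    · have hp : pairColor c γ δ = c γ δ := by
        unfold pairColor; rw [min_eq_left h.le, max_eq_right h.le]
      exact edge' γ δ hγ.1 hδ.1 hγ.2 hδ.2 h (hΛ (hp ▸ hcol))
    · have hp : pairColor c γ δ = c δ γ := by
        unfold pairColor; rw [min_eq_right h.le, max_eq_left h.le]
      exact (edge' δ γ hδ.1 hγ.1 hδ.2 hγ.2 h (hΛ (hp ▸ hcol))).symm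
  -- every element of X has index ≤ i
  have hnt : X.Nontrivial := by
    have h1' : (1 : Cardinal.{1}) < #X := by
      rw [hXsize]
      have : (1 : Cardinal.{0}) < μ := one_lt_aleph0.trans_le hμ.aleph0_le
      have := Cardinal.lift_lt.{0,1}.mpr this
      simpa using this
    rw [Cardinal.one_lt_iff_nontrivial] at h1'
    obtain ⟨⟨a, ha⟩, ⟨b, hb⟩, hab⟩ := h1'
    exact ⟨a, ha, b, hb, fun h => hab (Subtype.ext h)⟩
  have hidxX : ∀ β ∈ X, iidx β ≤ i := by
    intro β hβ
    obtain ⟨a, ha, b, hb, hab⟩ := hnt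
    have : ∃ α ∈ X, α ≠ β := by
      rcases eq_or_ne a β with rfl | h
      · exact ⟨b, hb, fun h => hab h.symm⟩
      · exact ⟨a, ha, h⟩
    obtain ⟨α, hα, hne⟩ := this
    rcases hne.lt_or_gt with h | h
    · obtain ⟨n, f, hf0, hfn, hdom, hedge⟩ := hwc α hα β hβ h
      have hn : n ≠ 0 := by
        rintro rfl; rw [hf0] at hfn; exact absurd hfn (ne_of_lt h)
      have hn1 : n - 1 < n := Nat.sub_lt (Nat.pos_of_ne_zero hn) one_pos
      obtain ⟨hne', hcol⟩ := hedge (n - 1) hn1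
      have hsucc : n - 1 + 1 = n := Nat.succ_pred_eq_of_pos (Nat.pos_of_ne_zero hn)
      rw [hsucc, hfn] at hne' hcol
      exact (key (f (n - 1)) β (hdom (n - 1) hn1.le).2 (hX hβ) hne' hcol).2
    · obtain ⟨n, f, hf0, hfn, hdom, hedge⟩ := hwc β hβ α hα h
      have hn : n ≠ 0 := by
        rintro rfl; rw [hf0] at hfn; exact absurd hfn (ne_of_lt h)
      obtain ⟨hne', hcol⟩ := hedge 0 (Nat.pos_of_ne_zero hn)
      rw [hf0] at hne' hcol
      exact (key β (f 1) (hX hβ) (hdom 1 (Nat.one_le_iff_ne_zero.mpr hn)).2 hne' hcol).1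
  -- coherence within X
  have hcohX : ∀ α ∈ X, ∀ β ∈ X, α < β → C α i = C β i ∩ Set.Iio α := by
    intro α hα β hβ hlt
    exact (h4 α β hlt (hX hβ).1 (hX hα).2 (hX hβ).2 i (hidxX β hβ) hi
      (hacc α hα β hβ hlt)).2
  have hclubX : ∀ α ∈ X, IsClubIn (C α i) α := fun α hα =>
    h2 α (hX hα).1 (hX hα).2 i (hidxX α hα) hi
  -- X is unbounded in μ.ord
  have hXunbdd : ∀ β, β < μ.ord → ∃ α ∈ X, β < α := by
    intro β hβ
    by_contra hcon
    push_neg at hcon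
    have hsub : X ⊆ Set.Iio (β + 1) := fun α hα =>
      Order.lt_add_one_iff.mpr (hcon α hα)
    have hle : #X ≤ #(Set.Iio (β + 1)) := Cardinal.mk_le_mk_of_subset hsub
    rw [hXsize, Ordinal.mk_Iio_ordinal] at hle
    have hle' : μ ≤ (β + 1).card := Cardinal.lift_le.mp hle
    have hlt' : β + 1 < μ.ord := (Cardinal.isSuccLimit_ord hμ.aleph0_le).succ_lt hβ
    have := Cardinal.lt_ord.mp hlt'
    exact absurd hle' (not_le.mpr this)
  set D := ⋃ α ∈ X, C α i with hD
  have hDsubα : ∀ α ∈ X, C α i ⊆ D := fun α hα x hx =>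
    Set.mem_iUnion₂.mpr ⟨α, hα, hx⟩
  have hDcap : ∀ α ∈ X, D ∩ Set.Iio α = C α i := by
    intro α hα
    apply Set.eq_of_subset_of_subset
    · rintro x ⟨hx, hxα⟩
      obtain ⟨γ, hγ, hxγ⟩ := Set.mem_iUnion₂.mp hx
      rcases lt_trichotomy γ α with h | rfl | h
      · exact ((hcohX γ hγ α hα h) ▸ hxγ).1
      · exact hxγ
      · exact (hcohX α hα γ hγ h) ▸ ⟨hxγ, hxα⟩
    · intro x hx
      exact ⟨hDsubα α hα hx, (hclubX α hα).1 hx⟩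
  have hcapβ : ∀ β, ∀ α ∈ X, β < α → D ∩ Set.Iio β = C α i ∩ Set.Iio β := by
    intro β α hα hβα
    have : D ∩ Set.Iio β = (D ∩ Set.Iio α) ∩ Set.Iio β := by
      rw [Set.inter_assoc, Set.Iio_inter_Iio, min_eq_right hβα.le]
    rw [this, hDcap α hα]
  -- main coherence claim
  have hmain : ∀ β ∈ accPts D, β < μ.ord → D ∩ Set.Iio β = C β i := by
    intro β hβacc hβμ
    obtain ⟨α, hα, hβα⟩ := hXunbdd β hβμ
    have hcap := hcapβ β α hα hβα
    have hβaccα : β ∈ accPts (C α i) := accPts_congr hcap hβacc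
    have hβl : Order.IsSuccLimit β := accPts_isLimit hβacc
    have := (h4 β α hβα (hX hα).1 hβl (hX hα).2 i (hidxX α hα) hi hβaccα).2
    rw [hcap, ← this]
  refine ⟨⟨?_, ?_, ?_⟩, hmain⟩
  · intro x hx
    obtain ⟨γ, hγ, hxγ⟩ := Set.mem_iUnion₂.mp hx
    exact lt_trans ((hclubX γ hγ).1 hxγ) (hX hγ).1
  · intro β hβ
    obtain ⟨α, hα, hβα⟩ := hXunbdd β hβ
    obtain ⟨γ, hγ, hβγ⟩ := (hclubX α hα).2.1 β hβα
    exact ⟨γ, hDsubα α hα hγ, hβγ⟩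
  · rintro β ⟨hβacc, hβμ⟩
    obtain ⟨α, hα, hβα⟩ := hXunbdd β hβμ
    have hβaccα : β ∈ accPts (C α i) := accPts_congr (hcapβ β α hα hβα) hβacc
    exact hDsubα α hα ((hclubX α hα).2.2 ⟨hβaccα, hβα⟩)


end
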